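/- Let F be a finite nonempty type, let P be an F-by-F real matrix with nonnegative entries such that every row of P sums to 1, let α be a real number with 0 < α < 1, let w : F → ℝ satisfy w(i) > 0 for all i and the detailed-balance condition w(i)·P[i,j] = w(j)·P[j,i] for all i, j, and let s : F → ℝ satisfy s(i) > 0 for all i. Let R = ∑_{ℓ=0}^{∞} (1−α)·α^ℓ · P^ℓ and define C(e) = ∑_{i ∈ F} (w(i)/s(i))·R[i,e]. Then for every e ∈ F: w(e) / (max_{i ∈ F} s(i)) ≤ C(e) ≤ w(e) / (min_{i ∈ F} s(i)). -/

import Mathlib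

open Matrix Finset

/-- Under detailed balance, the EdgeRAKE centrality `C e` satisfies
`w e / max_i s i ≤ C e ≤ w e / min_i s i`. -/
theorem stmt_8 {F : Type*} [Fintype F] [Nonempty F] [DecidableEq F]
    (P : Matrix F F ℝ)
    (hP : ∀ i j, 0 ≤ P i j)
    (hrow : ∀ i, ∑ j, P i j = 1)
    (α : ℝ) (hα : 0 < α) (hα1 : α < 1)
    (w : F → ℝ) (hw : ∀ i, 0 < w i)
    (hdb : ∀ i j, w i * P i j = w j * P j i)
    (s : F → ℝ) (hs : ∀ i, 0 < s i)
    (R : Matrix F F ℝ) (hR : R = ∑' ℓ : ℕ, ((1 - α) * α ^ ℓ) • P ^ ℓ)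
    (C : F → ℝ) (hC : ∀ e, C e = ∑ i, (w i / s i) * R i e) :
    ∀ e, w e / (Finset.univ.sup' Finset.univ_nonempty s) ≤ C e ∧
         C e ≤ w e / (Finset.univ.inf' Finset.univ_nonempty s) := by
  set c : ℕ → ℝ := fun ℓ => (1 - α) * α ^ ℓ with hc
  have hα0 : (0:ℝ) ≤ α := le_of_lt hα
  have hcnn : ∀ ℓ, 0 ≤ c ℓ := fun ℓ => mul_nonneg (by linarith) (pow_nonneg hα0 ℓ)
  have hcsum : Summable c := (summable_geometric_of_lt_one hα0 hα1).mul_left _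
  have hctsum : ∑' ℓ, c ℓ = 1 := by
    rw [hc, tsum_mul_left, tsum_geometric_of_lt_one hα0 hα1]
    exact mul_inv_cancel₀ (by linarith : (1:ℝ) - α ≠ 0)
  -- powers are stochastic
  have hpow : ∀ n : ℕ, (∀ i j, 0 ≤ (P ^ n) i j) ∧ (∀ i, ∑ j, (P ^ n) i j = 1) := by
    intro n
    induction n with
    | zero =>
      constructor
      · intro i j; simp [Matrix.one_apply]; positivity
      · intro i; simp [Matrix.one_apply]
    | succ n ih =>
      constructor
      · intro i j
        rw [pow_succ, Matrix.mul_apply]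
        exact Finset.sum_nonneg fun k _ => mul_nonneg (ih.1 i k) (hP k j)
      · intro i
        simp only [pow_succ, Matrix.mul_apply]
        rw [Finset.sum_comm]
        calc ∑ k, ∑ j, (P ^ n) i k * P k j
            = ∑ k, (P ^ n) i k * ∑ j, P k j := by
              simp [Finset.mul_sum]
          _ = 1 := by simp [hrow, ih.2 i]
  have hpow_le : ∀ n (i j : F), (P ^ n) i j ≤ 1 := by
    intro n i j
    calc (P ^ n) i j ≤ ∑ j', (P ^ n) i j' :=
          Finset.single_le_sum (fun k _ => (hpow n).1 i k) (Finset.mem_univ j)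
      _ = 1 := (hpow n).2 i
  -- detailed balance for powers
  have hdbn : ∀ n (i j : F), w i * (P ^ n) i j = w j * (P ^ n) j i := by
    intro n
    induction n with
    | zero => intro i j; by_cases h : i = j <;> simp [Matrix.one_apply, h, eq_comm]
    | succ n ih =>
      intro i j
      conv_lhs => rw [pow_succ]
      conv_rhs => rw [pow_succ']
      rw [Matrix.mul_apply, Matrix.mul_apply, Finset.mul_sum, Finset.mul_sum]
      apply Finset.sum_congr rfl
      intro k _
      calc w i * ((P ^ n) i k * P k j) = (w i * (P ^ n) i k) * P k j := by ring
        _ = (w k * (P ^ n) k i) * P k j := by rw [ih i k]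
        _ = (w k * P k j) * (P ^ n) k i := by ring
        _ = (w j * P j k) * (P ^ n) k i := by rw [hdb k j]
        _ = w j * (P j k * (P ^ n) k i) := by ring
  -- entrywise summability
  have hsum_entry : ∀ i j : F, Summable (fun ℓ => c ℓ * (P ^ ℓ) i j) := by
    intro i j
    apply Summable.of_nonneg_of_le
      (fun ℓ => mul_nonneg (hcnn ℓ) ((hpow ℓ).1 i j))
      (fun ℓ => ?_) hcsum
    calc c ℓ * (P ^ ℓ) i j ≤ c ℓ * 1 :=
          mul_le_mul_of_nonneg_left (hpow_le ℓ i j) (hcnn ℓ)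
      _ = c ℓ := mul_one _
  -- entrywise formula for R
  have hRentry : ∀ i j : F, R i j = ∑' ℓ, c ℓ * (P ^ ℓ) i j := by
    have hHS : HasSum (fun ℓ => c ℓ • P ^ ℓ)
        (Matrix.of fun i j => ∑' ℓ, c ℓ * (P ^ ℓ) i j) := by
      refine Pi.hasSum.mpr ?_
      intro i
      rw [Pi.hasSum]
      intro j
      simpa [Matrix.smul_apply, smul_eq_mul] using (hsum_entry i j).hasSum
    have : R = Matrix.of fun i j => ∑' ℓ, c ℓ * (P ^ ℓ) i j := by
      rw [hR]; exact hHS.tsum_eq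
    intro i j; rw [this]; rfl
  have hRnn : ∀ i j : F, 0 ≤ R i j := by
    intro i j
    rw [hRentry]
    exact tsum_nonneg fun ℓ => mul_nonneg (hcnn ℓ) ((hpow ℓ).1 i j)
  have hRdb : ∀ i j : F, w i * R i j = w j * R j i := by
    intro i j
    rw [hRentry, hRentry, ← tsum_mul_left, ← tsum_mul_left]
    apply tsum_congr
    intro ℓ
    calc w i * (c ℓ * (P ^ ℓ) i j) = c ℓ * (w i * (P ^ ℓ) i j) := by ring
      _ = c ℓ * (w j * (P ^ ℓ) j i) := by rw [hdbn]
      _ = w j * (c ℓ * (P ^ ℓ) j i) := by ring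
  have hRrow : ∀ e : F, ∑ i, R e i = 1 := by
    intro e
    calc ∑ i, R e i = ∑ i, ∑' ℓ, c ℓ * (P ^ ℓ) e i := by
          simp [hRentry]
      _ = ∑' ℓ, ∑ i, c ℓ * (P ^ ℓ) e i :=
          (Summable.tsum_finsetSum fun i _ => hsum_entry e i).symm
      _ = ∑' ℓ, c ℓ := by
          apply tsum_congr; intro ℓ
          rw [← Finset.mul_sum, (hpow ℓ).2 e, mul_one]
      _ = 1 := hctsum
  intro e
  set smax := Finset.univ.sup' Finset.univ_nonempty s with hsmax
  set smin := Finset.univ.inf' Finset.univ_nonempty s with hsmin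
  have hsminpos : 0 < smin := by
    rw [hsmin, Finset.lt_inf'_iff]
    exact fun i _ => hs i
  have hsmaxpos : 0 < smax := by
    obtain ⟨i⟩ := ‹Nonempty F›
    exact lt_of_lt_of_le (hs i) (Finset.le_sup' s (Finset.mem_univ i))
  have hCe : C e = ∑ i, w e * R e i / s i := by
    rw [hC]
    apply Finset.sum_congr rfl
    intro i _
    rw [div_mul_eq_mul_div, hRdb i e]
  have hupper : C e ≤ w e / smin := by
    rw [hCe]
    calc ∑ i, w e * R e i / s i ≤ ∑ i, w e * R e i / smin := by
          apply Finset.sum_le_sum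
          intro i _
          exact div_le_div_of_nonneg_left
            (mul_nonneg (hw e).le (hRnn e i)) hsminpos
            (Finset.inf'_le s (Finset.mem_univ i)) |>.trans_eq rfl
      _ = w e / smin := by
          rw [← Finset.sum_div, ← Finset.mul_sum, hRrow, mul_one]
  have hlower : w e / smax ≤ C e := by
    rw [hCe]
    calc w e / smax = ∑ i, w e * R e i / smax := by
          rw [← Finset.sum_div, ← Finset.mul_sum, hRrow, mul_one]
      _ ≤ ∑ i, w e * R e i / s i := by
          apply Finset.sum_le_sum
          intro i _
          exact div_le_div_of_nonneg_left
            (mul_nonneg (hw e).le (hRnn e i)) (hs i)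
            (Finset.le_sup' s (Finset.mem_univ i))
  exact ⟨hlower, hupper⟩
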